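/- Let z ∈ ℝ² with |z| < 1 and z ≠ (0,−1/2), and let δ ∈ (0,1) be such that for every A = (ρ,w,ζ) in the open Euclidean ball 𝔹 of radius δ centered at (0,0,z) in ℝ⁵ one has x(A) ≠ a_x(A) and y(A) ≠ a_y(A), where x(A) = (ζ+w)/(1+ρ), a_x(A) = w + (0,−(1−ρ)/2), y(A) = (w−ζ)/(1−ρ), a_y(A) = w + (0,(1+ρ)/2). Define x₁(A) = a_x(A) − (1−ρ)(x(A)−a_x(A))/|x(A)−a_x(A)|, x₂(A) = a_x(A) + (1−ρ)(x(A)−a_x(A))/|x(A)−a_x(A)|, y₁(A) = a_y(A) − (1+ρ)(y(A)−a_y(A))/|y(A)−a_y(A)|, y₂(A) = a_y(A) + (1+ρ)(y(A)−a_y(A))/|y(A)−a_y(A)|, and the four sets T₁(𝔹) = {(1,x₁(A),x₁(A)) : A ∈ 𝔹}, T₂(𝔹) = {(1,x₂(A),x₂(A)) : A ∈ 𝔹}, T₃(𝔹) = {(−1,y₁(A),−y₁(A)) : A ∈ 𝔹}, T₄(𝔹) = {(−1,y₂(A),−y₂(A)) : A ∈ 𝔹}. Let 𝒰_z = ⋃_{i=1}^{4}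 (𝔹 ∪ Tᵢ(𝔹))^{1,Λ}, where for a set S ⊂ ℝ⁵ its first Λ-convex hull is S^{1,Λ} = {tB + (1−t)C : B,C ∈ S, B−C ∈ Λ, t ∈ [0,1]}. Then the set 𝒰_z \ K is open in ℝ⁵. -/

import Mathlib

open Set

noncomputable section

/-- The state space `ℝ × ℝ² × ℝ²` of triples `(ρ, v, q)` (also written `(ρ, w, z)`). -/
abbrev St : Type := ℝ × (ℝ × ℝ) × (ℝ × ℝ)

/-- The wave cone `Λ = {(ρ, v, q) : ρ (v₁² + v₂² + ρ v₂) = 0}`. -/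
def Lam : Set St := {A : St | A.1 * (A.2.1.1 ^ 2 + A.2.1.2 ^ 2 + A.1 * A.2.1.2) = 0}

/-- The constraint set `K = {(ρ, v, ρ v) : ρ ∈ ℝ, v ∈ ℝ²}`. -/
def Kset : Set St := {A : St | A.2.2 = A.1 • A.2.1}

/-- The Euclidean norm on the state space `ℝ × ℝ² × ℝ² ≅ ℝ⁵`. -/
def enorm5 (A : St) : ℝ :=
  Real.sqrt (A.1 ^ 2 + A.2.1.1 ^ 2 + A.2.1.2 ^ 2 + A.2.2.1 ^ 2 + A.2.2.2 ^ 2)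

/-- The Euclidean norm on `ℝ²`. -/
def norm2 (u : ℝ × ℝ) : ℝ := Real.sqrt (u.1 ^ 2 + u.2 ^ 2)

/-- For `A = (ρ, w, ζ)`, the point `x(A) = (ζ + w)/(1 + ρ)`. -/
def xA (A : St) : ℝ × ℝ := (1 / (1 + A.1)) • (A.2.2 + A.2.1)

/-- For `A = (ρ, w, ζ)`, the center `a_x(A) = w + (0, -(1-ρ)/2)`. -/
def axA (A : St) : ℝ × ℝ := A.2.1 + (0, -(1 - A.1) / 2)

/-- For `A = (ρ, w, ζ)`, the point `y(A) = (w - ζ)/(1 - ρ)`. -/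
def yA (A : St) : ℝ × ℝ := (1 / (1 - A.1)) • (A.2.1 - A.2.2)

/-- For `A = (ρ, w, ζ)`, the center `a_y(A) = w + (0, (1+ρ)/2)`. -/
def ayA (A : St) : ℝ × ℝ := A.2.1 + (0, (1 + A.1) / 2)

/-- `x₁(A) = a_x(A) - (1-ρ)(x(A) - a_x(A))/|x(A) - a_x(A)|`. -/
def x1A (A : St) : ℝ × ℝ := axA A - ((1 - A.1) / norm2 (xA A - axA A)) • (xA A - axA A)

/-- `x₂(A) = a_x(A) + (1-ρ)(x(A) - a_x(A))/|x(A) - a_x(A)|`. -/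
def x2A (A : St) : ℝ × ℝ := axA A + ((1 - A.1) / norm2 (xA A - axA A)) • (xA A - axA A)

/-- `y₁(A) = a_y(A) - (1+ρ)(y(A) - a_y(A))/|y(A) - a_y(A)|`. -/
def y1A (A : St) : ℝ × ℝ := ayA A - ((1 + A.1) / norm2 (yA A - ayA A)) • (yA A - ayA A)

/-- `y₂(A) = a_y(A) + (1+ρ)(y(A) - a_y(A))/|y(A) - a_y(A)|`. -/
def y2A (A : St) : ℝ × ℝ := ayA A + ((1 + A.1) / norm2 (yA A - ayA A)) • (yA A - ayA A)

/-- The open Euclidean ball `𝔹` of radius `δ` centered at `(0, 0, z)` in `ℝ⁵`. -/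
def Bz (z : ℝ × ℝ) (δ : ℝ) : Set St := {A : St | enorm5 (A - (0, (0, 0), z)) < δ}

/-- `T₁(𝔹) = {(1, x₁(A), x₁(A)) : A ∈ 𝔹}`. -/
def T1set (z : ℝ × ℝ) (δ : ℝ) : Set St := (fun A : St => ((1 : ℝ), x1A A, x1A A)) '' Bz z δ

/-- `T₂(𝔹) = {(1, x₂(A), x₂(A)) : A ∈ 𝔹}`. -/
def T2set (z : ℝ × ℝ) (δ : ℝ) : Set St := (fun A : St => ((1 : ℝ), x2A A, x2A A)) '' Bz z δ

/-- `T₃(𝔹) = {(-1, y₁(A), -y₁(A)) : A ∈ 𝔹}`. -/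
def T3set (z : ℝ × ℝ) (δ : ℝ) : Set St := (fun A : St => ((-1 : ℝ), y1A A, -y1A A)) '' Bz z δ

/-- `T₄(𝔹) = {(-1, y₂(A), -y₂(A)) : A ∈ 𝔹}`. -/
def T4set (z : ℝ × ℝ) (δ : ℝ) : Set St := (fun A : St => ((-1 : ℝ), y2A A, -y2A A)) '' Bz z δ

/-- The first `Λ`-convex hull of a set `S`:
`S^{1,Λ} = {t B + (1-t) C : B, C ∈ S, B - C ∈ Λ, t ∈ [0,1]}`. -/
def firstLamHull (S : Set St) : Set St :=
  {P : St | ∃ B ∈ S, ∃ C ∈ S, B - C ∈ Lam ∧ ∃ t ∈ Icc (0 : ℝ) 1, P = t • B + (1 - t) • C}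

/-- `𝒰_z = ⋃ᵢ (𝔹 ∪ Tᵢ(𝔹))^{1,Λ}`. -/
def Uz (z : ℝ × ℝ) (δ : ℝ) : Set St :=
  firstLamHull (Bz z δ ∪ T1set z δ) ∪ firstLamHull (Bz z δ ∪ T2set z δ) ∪
    firstLamHull (Bz z δ ∪ T3set z δ) ∪ firstLamHull (Bz z δ ∪ T4set z δ)


namespace UzAux

/-- `b₀ - c(Q)` where `c(Q)` is the center of the `Λ`-circle through `Q`. -/
def efn (ε : ℝ) (b0 : ℝ × ℝ) (Q : St) : ℝ × ℝ :=
  (b0.1 - Q.2.1.1, b0.2 - Q.2.1.2 + (ε - Q.1) / 2)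

def nfn (ε : ℝ) (b0 : ℝ × ℝ) (Q : St) : ℝ := norm2 (efn ε b0 Q)

def lfn (ε : ℝ) (b0 : ℝ × ℝ) (Q : St) : ℝ := ε * (ε - Q.1) / (2 * nfn ε b0 Q)

def bfn (ε : ℝ) (b0 : ℝ × ℝ) (Q : St) : ℝ × ℝ :=
  (Q.2.1.1 + lfn ε b0 Q * (efn ε b0 Q).1,
   (Q.2.1.2 - (ε - Q.1) / 2) + lfn ε b0 Q * (efn ε b0 Q).2)

def Afn (A₀ : St) (ε : ℝ) (b0 : ℝ × ℝ) (Q : St) : St :=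
  (A₀.1, A₀.2.1 + (bfn ε b0 Q - b0), A₀.2.2 + A₀.1 • (bfn ε b0 Q - b0))

def Bfn (ε : ℝ) (b0 : ℝ × ℝ) (Q : St) : St := (ε, bfn ε b0 Q, ε • bfn ε b0 Q)

def Cfn (t ε : ℝ) (b0 : ℝ × ℝ) (Q : St) : St := (1 / (1 - t)) • (Q - t • Bfn ε b0 Q)

lemma continuous_nfn (ε : ℝ) (b0 : ℝ × ℝ) : Continuous (nfn ε b0) := by
  unfold nfn norm2 efn; fun_prop

lemma nfn_nonneg (ε : ℝ) (b0 : ℝ × ℝ) (Q : St) : 0 ≤ nfn ε b0 Q := Real.sqrt_nonneg _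

lemma nfn_sq (ε : ℝ) (b0 : ℝ × ℝ) (Q : St) :
    nfn ε b0 Q ^ 2 = (efn ε b0 Q).1 ^ 2 + (efn ε b0 Q).2 ^ 2 := by
  unfold nfn norm2; rw [Real.sq_sqrt] ; positivity

lemma continuous_efn (ε : ℝ) (b0 : ℝ × ℝ) : Continuous (efn ε b0) := by
  unfold efn; fun_prop

lemma continuousOn_bfn (ε : ℝ) (b0 : ℝ × ℝ) :
    ContinuousOn (bfn ε b0) {Q | 0 < nfn ε b0 Q} := by
  have hl : ContinuousOn (lfn ε b0) {Q | 0 < nfn ε b0 Q} := by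
    unfold lfn
    apply ContinuousOn.div (by fun_prop)
      ((continuous_const.mul (continuous_nfn ε b0)).continuousOn)
    intro Q hQ
    have : (0:ℝ) < nfn ε b0 Q := hQ
    exact mul_ne_zero two_ne_zero this.ne'
  unfold bfn
  exact ContinuousOn.prodMk
    ((Continuous.continuousOn (by fun_prop : Continuous fun Q : St => Q.2.1.1)).add
      (hl.mul (continuous_fst.comp (continuous_efn ε b0)).continuousOn))
    ((Continuous.continuousOn (by fun_prop : Continuous fun Q : St => Q.2.1.2 - (ε - Q.1) / 2)).add
      (hl.mul (continuous_snd.comp (continuous_efn ε b0)).continuousOn))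

lemma continuousOn_Afn (A₀ : St) (ε : ℝ) (b0 : ℝ × ℝ) :
    ContinuousOn (Afn A₀ ε b0) {Q | 0 < nfn ε b0 Q} := by
  have hb := continuousOn_bfn ε b0
  unfold Afn
  apply ContinuousOn.prodMk continuousOn_const
  apply ContinuousOn.prodMk
  · exact ContinuousOn.fun_add continuousOn_const (hb.fun_sub continuousOn_const)
  · exact ContinuousOn.fun_add continuousOn_const (ContinuousOn.fun_smul continuousOn_const (hb.fun_sub continuousOn_const))

lemma continuousOn_Cfn (t ε : ℝ) (b0 : ℝ × ℝ) :
    ContinuousOn (Cfn t ε b0) {Q | 0 < nfn ε b0 Q} := by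
  have hb := continuousOn_bfn ε b0
  have hB : ContinuousOn (Bfn ε b0) {Q | 0 < nfn ε b0 Q} := by
    unfold Bfn
    exact ContinuousOn.prodMk continuousOn_const (ContinuousOn.prodMk hb (ContinuousOn.fun_smul continuousOn_const hb))
  unfold Cfn
  exact ContinuousOn.fun_smul continuousOn_const (ContinuousOn.fun_sub continuousOn_id (ContinuousOn.fun_smul continuousOn_const hB))

end UzAux

namespace UzAux2
open UzAux

lemma smul_mem_Lam (r : ℝ) {X : St} (h : X ∈ Lam) : r • X ∈ Lam := by
  simp only [Lam, mem_setOf_eq, Prod.smul_fst, Prod.smul_snd, smul_eq_mul] at *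
  linear_combination r^3 * h

lemma abs_fst_lt {z : ℝ × ℝ} {δ : ℝ} {A : St} (h : A ∈ Bz z δ) : |A.1| < δ := by
  obtain ⟨a, ⟨b, c⟩, d, e⟩ := A
  simp only [Bz, mem_setOf_eq, enorm5, Prod.mk_sub_mk, sub_zero] at h
  simp only
  calc |a| = Real.sqrt (a^2) := (Real.sqrt_sq_eq_abs a).symm
    _ ≤ Real.sqrt (a ^ 2 + b ^ 2 + c ^ 2 + (d - z.1) ^ 2 + (e - z.2) ^ 2) := by
        apply Real.sqrt_le_sqrt; nlinarith [sq_nonneg b, sq_nonneg c, sq_nonneg (d - z.1), sq_nonneg (e - z.2)]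
    _ < δ := h

lemma Bfn_sub_mem_Lam (ε : ℝ) (hε2 : ε^2 = 1) (b0 : ℝ × ℝ) (Q : St)
    (hQ : 0 < nfn ε b0 Q) : Bfn ε b0 Q - Q ∈ Lam := by
  have hn := nfn_sq ε b0 Q
  have hn0 : nfn ε b0 Q ≠ 0 := ne_of_gt hQ
  obtain ⟨q, ⟨u1, u2⟩, q1, q2⟩ := Q
  set n := nfn ε b0 (q, (u1, u2), q1, q2) with hndef
  have hE1 : (efn ε b0 (q, (u1, u2), q1, q2)).1 = b0.1 - u1 := rfl
  have hE2 : (efn ε b0 (q, (u1, u2), q1, q2)).2 = b0.2 - u2 + (ε - q)/2 := rfl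
  set E1 := b0.1 - u1
  set E2 := b0.2 - u2 + (ε - q)/2
  rw [hE1, hE2] at hn
  have hl : lfn ε b0 (q, (u1, u2), q1, q2) = ε * (ε - q) / (2 * n) := rfl
  set l := ε * (ε - q) / (2 * n) with hldef
  have hl2 : l^2 * (E1^2 + E2^2) = (ε - q)^2 / 4 := by
    rw [← hn, hldef]
    field_simp
    linear_combination 4*(ε - q)^2 * hε2
  simp only [Lam, mem_setOf_eq, Bfn, bfn, Prod.mk_sub_mk, hE1, hE2, hl]
  linear_combination (ε - q) * hl2

lemma combo_Cfn (t ε : ℝ) (b0 : ℝ × ℝ) (Q : St) (ht : (1:ℝ) - t ≠ 0) :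
    t • Bfn ε b0 Q + (1 - t) • Cfn t ε b0 Q = Q := by
  unfold Cfn
  match_scalars <;> (field_simp; try ring)

lemma Bfn_sub_Cfn (t ε : ℝ) (b0 : ℝ × ℝ) (Q : St) (ht : (1:ℝ) - t ≠ 0) :
    Bfn ε b0 Q - Cfn t ε b0 Q = (1 / (1 - t)) • (Bfn ε b0 Q - Q) := by
  unfold Cfn
  match_scalars <;> (field_simp; try ring)

end UzAux2

namespace UzAux3
open UzAux UzAux2

lemma mixed_nhds (z : ℝ × ℝ) (δ : ℝ) (hδ1 : δ < 1)
    (ε : ℝ) (hε : ε = 1 ∨ ε = -1)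
    (F : St → ℝ × ℝ) (A₀ : St) (hA₀ : A₀ ∈ Bz z δ)
    (hF : ∀ d : ℝ × ℝ, F (A₀.1, A₀.2.1 + d, A₀.2.2 + A₀.1 • d) = F A₀ + d)
    (C₀ : St) (hC₀ : C₀ ∈ Bz z δ)
    (t : ℝ) (ht0 : 0 ≤ t) (ht1 : t < 1)
    (hL : ((ε, F A₀, ε • F A₀) : St) - C₀ ∈ Lam) :
    ∃ V : Set St, IsOpen V ∧ (t • ((ε, F A₀, ε • F A₀) : St) + (1 - t) • C₀) ∈ V ∧
      V ⊆ firstLamHull (Bz z δ ∪ (fun A : St => ((ε : ℝ), F A, ε • F A)) '' Bz z δ) := by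
  have hε2 : ε ^ 2 = 1 := by rcases hε with h | h <;> rw [h] <;> norm_num
  have ht1' : (1:ℝ) - t ≠ 0 := by intro h; apply absurd ht1; push_neg; linarith
  set b0 := F A₀ with hb0
  set B₀ : St := (ε, b0, ε • b0) with hB₀
  set P₀ : St := t • B₀ + (1 - t) • C₀ with hP₀
  obtain ⟨ρ, ⟨w1, w2⟩, ζ1, ζ2⟩ := C₀
  have hρ : |ρ| < 1 := by
    have := abs_fst_lt hC₀
    simp only at this
    linarith [this, hδ1]
  have hsρ : 0 < ε * (ε - ρ) := by
    obtain ⟨h1, h2⟩ := abs_lt.mp hρ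
    rcases hε with h | h <;> rw [h] <;> nlinarith
  have hsρ0 : ε - ρ ≠ 0 := by intro h; rw [h] at hsρ; simp at hsρ
  -- the circle equation at the base point
  have hL' : (b0.1 - w1)^2 + (b0.2 - w2)^2 + (ε - ρ)*(b0.2 - w2) = 0 := by
    simp only [Lam, mem_setOf_eq, hB₀, Prod.mk_sub_mk, Prod.fst_sub, Prod.snd_sub] at hL
    rcases mul_eq_zero.mp hL with h | h
    · exact absurd h hsρ0
    · linarith [h]
  -- components of P₀
  have hP1 : P₀.1 = t * ε + (1 - t) * ρ := by
    simp [hP₀, hB₀, Prod.smul_fst, smul_eq_mul]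
  have hPw1 : P₀.2.1.1 = t * b0.1 + (1 - t) * w1 := by
    simp [hP₀, hB₀, Prod.smul_fst, Prod.smul_snd, smul_eq_mul]
  have hPw2 : P₀.2.1.2 = t * b0.2 + (1 - t) * w2 := by
    simp [hP₀, hB₀, Prod.smul_fst, Prod.smul_snd, smul_eq_mul]
  have hE1 : (efn ε b0 P₀).1 = (1 - t) * (b0.1 - w1) := by
    simp only [efn, hPw1]; ring
  have hE2 : (efn ε b0 P₀).2 = (1 - t) * ((b0.2 - w2) + (ε - ρ)/2) := by
    simp only [efn, hPw2, hP1]; ring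
  have hm : 0 < (1 - t) * (ε * (ε - ρ)) / 2 := by
    have h1t : 0 < 1 - t := by linarith
    positivity
  have hn₀ : nfn ε b0 P₀ = (1 - t) * (ε * (ε - ρ)) / 2 := by
    have h1 : nfn ε b0 P₀ ^ 2 = ((1 - t) * (ε * (ε - ρ)) / 2) ^ 2 := by
      rw [nfn_sq, hE1, hE2]
      linear_combination (1-t)^2 * hL' - ((1-t)^2*(ε-ρ)^2/4) * hε2
    nlinarith [nfn_nonneg ε b0 P₀, h1, hm]
  have hn₀pos : 0 < nfn ε b0 P₀ := by rw [hn₀]; exact hm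
  have hlf₀ : lfn ε b0 P₀ = 1 := by
    unfold lfn
    rw [hn₀, hP1]
    rw [div_eq_one_iff_eq (by nlinarith)]
    ring
  have hbf₀ : bfn ε b0 P₀ = b0 := by
    unfold bfn
    rw [hlf₀]
    refine Prod.ext ?_ ?_ <;> (simp only [efn]; ring_nf)
  have hAf₀ : Afn A₀ ε b0 P₀ = A₀ := by
    unfold Afn; rw [hbf₀]; simp
  have hBf₀ : Bfn ε b0 P₀ = B₀ := by
    unfold Bfn; rw [hbf₀]
  have hCf₀ : Cfn t ε b0 P₀ = ((ρ, (w1, w2), ζ1, ζ2) : St) := by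
    unfold Cfn
    rw [hBf₀, hP₀]
    match_scalars <;> (field_simp; try ring)
  refine ⟨({Q | 0 < nfn ε b0 Q} ∩ Afn A₀ ε b0 ⁻¹' Bz z δ) ∩
      ({Q | 0 < nfn ε b0 Q} ∩ Cfn t ε b0 ⁻¹' Bz z δ), ?_, ?_, ?_⟩
  · have hU : IsOpen {Q | 0 < nfn ε b0 Q} := isOpen_lt continuous_const (continuous_nfn ε b0)
    have hBzo : IsOpen (Bz z δ) := by
      have : Bz z δ = (fun A : St => enorm5 (A - (0, (0, 0), z))) ⁻¹' Iio δ := rfl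
      rw [this]
      apply (isOpen_Iio).preimage
      unfold enorm5; fun_prop
    exact ((continuousOn_Afn A₀ ε b0).isOpen_inter_preimage hU hBzo).inter
      ((continuousOn_Cfn t ε b0).isOpen_inter_preimage hU hBzo)
  · exact ⟨⟨hn₀pos, by rw [mem_preimage, hAf₀]; exact hA₀⟩,
      ⟨hn₀pos, by rw [mem_preimage, hCf₀]; exact hC₀⟩⟩
  · rintro Q ⟨⟨hQn, hQA⟩, -, hQC⟩
    have hFQ : F (Afn A₀ ε b0 Q) = bfn ε b0 Q := by
      have := hF (bfn ε b0 Q - b0)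
      unfold Afn
      rw [this]
      abel
    refine ⟨Bfn ε b0 Q, Or.inr ⟨Afn A₀ ε b0 Q, hQA, ?_⟩, Cfn t ε b0 Q, Or.inl hQC, ?_,
      t, ⟨ht0, le_of_lt ht1⟩, (combo_Cfn t ε b0 Q ht1').symm⟩
    · simp only [hFQ]; rfl
    · rw [Bfn_sub_Cfn t ε b0 Q ht1']
      exact smul_mem_Lam _ (Bfn_sub_mem_Lam ε hε2 b0 Q hQn)

end UzAux3

namespace UzAux4
open UzAux UzAux2 UzAux3

lemma isOpen_Bz (z : ℝ × ℝ) (δ : ℝ) : IsOpen (Bz z δ) := by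
  have : Bz z δ = (fun A : St => enorm5 (A - (0, (0, 0), z))) ⁻¹' Iio δ := rfl
  rw [this]
  apply (isOpen_Iio).preimage
  unfold enorm5; fun_prop

lemma isClosed_Kset : IsClosed Kset := by
  have : Kset = {A : St | A.2.2 = A.1 • A.2.1} := rfl
  rw [this]
  exact isClosed_eq (by fun_prop) (by fun_prop)

lemma bothT_mem_K (ε t : ℝ) (b b' : ℝ × ℝ) :
    (t • ((ε, b, ε • b) : St) + (1 - t) • ((ε, b', ε • b') : St)) ∈ Kset := by
  simp only [Kset, mem_setOf_eq, Prod.smul_mk, Prod.mk_add_mk, smul_eq_mul]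
  have h : t * ε + (1 - t) * ε = ε := by ring
  rw [h]
  module

lemma T_mem_K (ε : ℝ) (b : ℝ × ℝ) : ((ε, b, ε • b) : St) ∈ Kset := rfl

lemma transl_nhds (z : ℝ × ℝ) (δ : ℝ) (S : Set St) (hS : Bz z δ ⊆ S)
    (B C : St) (hB : B ∈ Bz z δ) (hC : C ∈ Bz z δ) (hL : B - C ∈ Lam)
    (t : ℝ) (ht : t ∈ Icc (0:ℝ) 1) :
    ∃ V : Set St, IsOpen V ∧ (t • B + (1 - t) • C) ∈ V ∧ V ⊆ firstLamHull S := by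
  set P : St := t • B + (1 - t) • C with hP
  refine ⟨(fun Q : St => B + (Q - P)) ⁻¹' Bz z δ ∩ (fun Q : St => C + (Q - P)) ⁻¹' Bz z δ,
    ?_, ?_, ?_⟩
  · exact ((isOpen_Bz z δ).preimage (by fun_prop)).inter ((isOpen_Bz z δ).preimage (by fun_prop))
  · constructor <;> simp only [mem_preimage, sub_self, add_zero] <;> assumption
  · rintro Q ⟨hQ1, hQ2⟩
    refine ⟨B + (Q - P), hS hQ1, C + (Q - P), hS hQ2, by simpa using hL, t, ht, ?_⟩
    rw [hP]
    module

lemma hull_diff_K_isOpen (z : ℝ × ℝ) (δ : ℝ) (hδ1 : δ < 1)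
    (ε : ℝ) (hε : ε = 1 ∨ ε = -1) (F : St → ℝ × ℝ)
    (hF : ∀ A ∈ Bz z δ, ∀ d : ℝ × ℝ, F (A.1, A.2.1 + d, A.2.2 + A.1 • d) = F A + d) :
    IsOpen (firstLamHull (Bz z δ ∪ (fun A : St => ((ε : ℝ), F A, ε • F A)) '' Bz z δ) \ Kset) := by
  rw [isOpen_iff_forall_mem_open]
  rintro P ⟨hPhull, hPK⟩
  obtain ⟨B, hB, C, hC, hLam, t, ht, hP⟩ := hPhull
  have hKc : IsOpen Ksetᶜ := isClosed_Kset.isOpen_compl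
  rcases hB with hB | hB <;> rcases hC with hC | hC
  · -- both in the ball
    obtain ⟨V, hVo, hPV, hVsub⟩ :=
      transl_nhds z δ _ subset_union_left B C hB hC hLam t ht
    exact ⟨V ∩ Ksetᶜ, fun Q hQ => ⟨hVsub hQ.1, hQ.2⟩, hVo.inter hKc, by rw [← hP] at hPV; exact ⟨hPV, hPK⟩⟩
  · -- B in ball, C in T : swap
    obtain ⟨A₀, hA₀, hCeq⟩ := hC
    replace hCeq : ((ε, F A₀, ε • F A₀) : St) = C := hCeq
    rcases eq_or_lt_of_le ht.1 with h0 | h0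
    · -- t = 0 : P = C ∈ K, contradiction
      exfalso
      apply hPK
      have : P = C := by rw [hP, ← h0]; simp
      rw [this, ← hCeq]
      exact T_mem_K ε (F A₀)
    · obtain ⟨V, hVo, hPV, hVsub⟩ := mixed_nhds z δ hδ1 ε hε F A₀ hA₀ (hF A₀ hA₀) B hB
        (1 - t) (by linarith [ht.2]) (by linarith) (by rw [hCeq]; simpa using smul_mem_Lam (-1) hLam)
      refine ⟨V ∩ Ksetᶜ, fun Q hQ => ⟨hVsub hQ.1, hQ.2⟩, hVo.inter hKc, ⟨?_, hPK⟩⟩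
      have : P = (1 - t) • ((ε, F A₀, ε • F A₀) : St) + (1 - (1 - t)) • B := by
        rw [hP, hCeq]; module
      rw [← this] at hPV
      exact hPV
  · -- B in T, C in ball
    obtain ⟨A₀, hA₀, hBeq⟩ := hB
    replace hBeq : ((ε, F A₀, ε • F A₀) : St) = B := hBeq
    rcases eq_or_lt_of_le ht.2 with h1 | h1
    · exfalso
      apply hPK
      have : P = B := by rw [hP, h1]; simp
      rw [this, ← hBeq]
      exact T_mem_K ε (F A₀)
    · obtain ⟨V, hVo, hPV, hVsub⟩ := mixed_nhds z δ hδ1 ε hε F A₀ hA₀ (hF A₀ hA₀) C hC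
        t ht.1 h1 (by rw [hBeq]; exact hLam)
      refine ⟨V ∩ Ksetᶜ, fun Q hQ => ⟨hVsub hQ.1, hQ.2⟩, hVo.inter hKc, ⟨?_, hPK⟩⟩
      rw [← hBeq] at hP
      rw [← hP] at hPV
      exact hPV
  · -- both in T : P ∈ K, contradiction
    exfalso
    apply hPK
    obtain ⟨A₁, -, hBeq⟩ := hB
    obtain ⟨A₂, -, hCeq⟩ := hC
    replace hBeq : ((ε, F A₁, ε • F A₁) : St) = B := hBeq
    replace hCeq : ((ε, F A₂, ε • F A₂) : St) = C := hCeq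
    rw [hP, ← hBeq, ← hCeq]
    exact bothT_mem_K ε t (F A₁) (F A₂)

end UzAux4

namespace UzAux5

lemma xA_shift (A : St) (d : ℝ × ℝ) (h : 1 + A.1 ≠ 0) :
    xA (A.1, A.2.1 + d, A.2.2 + A.1 • d) = xA A + d := by
  obtain ⟨a, ⟨b, c⟩, e, f⟩ := A
  obtain ⟨d1, d2⟩ := d
  simp only at h
  simp only [xA, Prod.smul_mk, Prod.mk_add_mk, smul_eq_mul]
  refine Prod.ext ?_ ?_ <;> simp only <;> field_simp <;> ring

lemma axA_shift (A : St) (d : ℝ × ℝ) :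
    axA (A.1, A.2.1 + d, A.2.2 + A.1 • d) = axA A + d := by
  obtain ⟨a, ⟨b, c⟩, e, f⟩ := A
  obtain ⟨d1, d2⟩ := d
  simp only [axA, Prod.mk_add_mk]
  refine Prod.ext ?_ ?_ <;> simp <;> ring

lemma yA_shift (A : St) (d : ℝ × ℝ) (h : 1 - A.1 ≠ 0) :
    yA (A.1, A.2.1 + d, A.2.2 + A.1 • d) = yA A + d := by
  obtain ⟨a, ⟨b, c⟩, e, f⟩ := A
  obtain ⟨d1, d2⟩ := d
  simp only at h
  simp only [yA, Prod.smul_mk, Prod.mk_add_mk, Prod.mk_sub_mk, smul_eq_mul]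
  refine Prod.ext ?_ ?_ <;> simp only <;> field_simp <;> ring

lemma ayA_shift (A : St) (d : ℝ × ℝ) :
    ayA (A.1, A.2.1 + d, A.2.2 + A.1 • d) = ayA A + d := by
  obtain ⟨a, ⟨b, c⟩, e, f⟩ := A
  obtain ⟨d1, d2⟩ := d
  simp only [ayA, Prod.mk_add_mk]
  refine Prod.ext ?_ ?_ <;> simp <;> ring

lemma x1A_shift (A : St) (d : ℝ × ℝ) (h : 1 + A.1 ≠ 0) :
    x1A (A.1, A.2.1 + d, A.2.2 + A.1 • d) = x1A A + d := by
  have hd : xA (A.1, A.2.1 + d, A.2.2 + A.1 • d) - axA (A.1, A.2.1 + d, A.2.2 + A.1 • d)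
      = xA A - axA A := by rw [xA_shift A d h, axA_shift A d]; abel
  have hfst : ((A.1, A.2.1 + d, A.2.2 + A.1 • d) : St).1 = A.1 := rfl
  unfold x1A
  rw [hfst, hd, axA_shift A d]
  abel

lemma x2A_shift (A : St) (d : ℝ × ℝ) (h : 1 + A.1 ≠ 0) :
    x2A (A.1, A.2.1 + d, A.2.2 + A.1 • d) = x2A A + d := by
  have hd : xA (A.1, A.2.1 + d, A.2.2 + A.1 • d) - axA (A.1, A.2.1 + d, A.2.2 + A.1 • d)
      = xA A - axA A := by rw [xA_shift A d h, axA_shift A d]; abel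
  have hfst : ((A.1, A.2.1 + d, A.2.2 + A.1 • d) : St).1 = A.1 := rfl
  unfold x2A
  rw [hfst, hd, axA_shift A d]
  abel

lemma y1A_shift (A : St) (d : ℝ × ℝ) (h : 1 - A.1 ≠ 0) :
    y1A (A.1, A.2.1 + d, A.2.2 + A.1 • d) = y1A A + d := by
  have hd : yA (A.1, A.2.1 + d, A.2.2 + A.1 • d) - ayA (A.1, A.2.1 + d, A.2.2 + A.1 • d)
      = yA A - ayA A := by rw [yA_shift A d h, ayA_shift A d]; abel
  have hfst : ((A.1, A.2.1 + d, A.2.2 + A.1 • d) : St).1 = A.1 := rfl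
  unfold y1A
  rw [hfst, hd, ayA_shift A d]
  abel

lemma y2A_shift (A : St) (d : ℝ × ℝ) (h : 1 - A.1 ≠ 0) :
    y2A (A.1, A.2.1 + d, A.2.2 + A.1 • d) = y2A A + d := by
  have hd : yA (A.1, A.2.1 + d, A.2.2 + A.1 • d) - ayA (A.1, A.2.1 + d, A.2.2 + A.1 • d)
      = yA A - ayA A := by rw [yA_shift A d h, ayA_shift A d]; abel
  have hfst : ((A.1, A.2.1 + d, A.2.2 + A.1 • d) : St).1 = A.1 := rfl
  unfold y2A
  rw [hfst, hd, ayA_shift A d]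
  abel

end UzAux5

open UzAux UzAux2 UzAux3 UzAux4 UzAux5 in
/-- **Openness of the relaxed set.** The set `𝒰_z \ K` is open in `ℝ⁵`. -/
theorem Uz_sdiff_K_isOpen (z : ℝ × ℝ)
    (hz : Real.sqrt (z.1 ^ 2 + z.2 ^ 2) < 1) (hz' : z ≠ (0, -1/2))
    (δ : ℝ) (hδ0 : 0 < δ) (hδ1 : δ < 1)
    (hnd : ∀ A ∈ Bz z δ, xA A ≠ axA A ∧ yA A ≠ ayA A) :
    IsOpen (Uz z δ \ Kset) := by
  have hplus : ∀ A ∈ Bz z δ, 1 + A.1 ≠ 0 := by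
    intro A hA h
    have h1 := abs_lt.mp ((abs_fst_lt hA).trans hδ1)
    linarith [h1.1]
  have hminus : ∀ A ∈ Bz z δ, 1 - A.1 ≠ 0 := by
    intro A hA h
    have h1 := abs_lt.mp ((abs_fst_lt hA).trans hδ1)
    linarith [h1.2]
  have hF1 : ∀ A ∈ Bz z δ, ∀ d : ℝ × ℝ, x1A (A.1, A.2.1 + d, A.2.2 + A.1 • d) = x1A A + d :=
    fun A hA d => x1A_shift A d (hplus A hA)
  have hF2 : ∀ A ∈ Bz z δ, ∀ d : ℝ × ℝ, x2A (A.1, A.2.1 + d, A.2.2 + A.1 • d) = x2A A + d :=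
    fun A hA d => x2A_shift A d (hplus A hA)
  have hF3 : ∀ A ∈ Bz z δ, ∀ d : ℝ × ℝ, y1A (A.1, A.2.1 + d, A.2.2 + A.1 • d) = y1A A + d :=
    fun A hA d => y1A_shift A d (hminus A hA)
  have hF4 : ∀ A ∈ Bz z δ, ∀ d : ℝ × ℝ, y2A (A.1, A.2.1 + d, A.2.2 + A.1 • d) = y2A A + d :=
    fun A hA d => y2A_shift A d (hminus A hA)
  have e1 : T1set z δ = (fun A : St => ((1:ℝ), x1A A, (1:ℝ) • x1A A)) '' Bz z δ := by
    simp only [T1set, one_smul]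
  have e2 : T2set z δ = (fun A : St => ((1:ℝ), x2A A, (1:ℝ) • x2A A)) '' Bz z δ := by
    simp only [T2set, one_smul]
  have e3 : T3set z δ = (fun A : St => ((-1:ℝ), y1A A, (-1:ℝ) • y1A A)) '' Bz z δ := by
    simp only [T3set, neg_one_smul]
  have e4 : T4set z δ = (fun A : St => ((-1:ℝ), y2A A, (-1:ℝ) • y2A A)) '' Bz z δ := by
    simp only [T4set, neg_one_smul]
  rw [Uz, union_diff_distrib, union_diff_distrib, union_diff_distrib]
  refine IsOpen.union (IsOpen.union (IsOpen.union ?_ ?_) ?_) ?_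
  · rw [e1]; exact hull_diff_K_isOpen z δ hδ1 1 (Or.inl rfl) x1A hF1
  · rw [e2]; exact hull_diff_K_isOpen z δ hδ1 1 (Or.inl rfl) x2A hF2
  · rw [e3]; exact hull_diff_K_isOpen z δ hδ1 (-1) (Or.inr rfl) y1A hF3
  · rw [e4]; exact hull_diff_K_isOpen z δ hδ1 (-1) (Or.inr rfl) y2A hF4
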